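/- arXiv:2009.01751 — 2 statements merged into one kernel-verified Lean document; each statement's English description precedes it below -/
import Mathlib

section
/- Under Slater's condition and boundedness of the cost and constraints, if the non-parametric problem has zero duality gap (P* = D*) and the family {π_θ} is an ε-universal parametrization with the Lagrangian difference bounded as |L(θ*, λ) − L(π*, λ)| ≤ (B_r + ‖λ‖₁ B_l) ε/(1−γ) for any minimizer π* of L(·, λ) and its ε-approximation θ*, then the parametrized dual optimum satisfies P* ≤ D*_θ ≤ P* + (B_r + ‖λ*_ε‖₁ B_l) ε/(1−γ), where λ*_ε is the dual solution of the perturbed problem with perturbations ξ_i = −B_l ε/(1−γ). -/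
open scoped BigOperators

/-- Theorem 1 of the paper: under Slater's condition, boundedness of
cost and constraints, zero duality gap for the non-parametric problem, and the
ε-universal approximation property of the parametrization (Lagrangian minimizers can be
ε-approximated with Lagrangian error `(B_r + ‖λ‖₁ B_l) ε/(1−γ)`), the parametrized dual
optimum satisfies `P* ≤ D*_θ ≤ P* + (B_r + ‖λ*_ε‖₁ B_l) ε/(1−γ)`, where `λ*_ε ≥ 0`
maximizes the dual function of the problem perturbed by `ξ_i = −B_l ε/(1−γ)`. -/
theorem parametrized_dual_two_sided_bound
    {Pol : Type*} [Nonempty Pol] {Θ : Type*} [Nonempty Θ] {r : ℕ}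
    (J : Pol → ℝ) (Lc : Pol → Fin r → ℝ) (par : Θ → Pol)
    (Br Bl ε γ : ℝ) (hBr : 0 ≤ Br) (hBl : 0 ≤ Bl) (hε : 0 < ε) (hγ : 0 ≤ γ) (hγ1 : γ < 1)
    -- boundedness of the (discounted) cost and constraints
    (hJbdd : ∀ p, |J p| ≤ Br / (1 - γ)) (hLbdd : ∀ p i, |Lc p i| ≤ Bl / (1 - γ))
    -- Slater's condition: a strictly feasible policy exists
    (hslater : ∃ p : Pol, ∀ i, Lc p i < 0)
    -- Lagrangian, dual functions, primal/dual values
    (Lag : Pol → (Fin r → ℝ) → ℝ)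
    (hLag : ∀ p lam, Lag p lam = J p + ∑ i, lam i * Lc p i)
    (d dθ : (Fin r → ℝ) → EReal)
    (hd : ∀ lam, d lam = ⨅ p : Pol, ((Lag p lam : ℝ) : EReal))
    (hdθ : ∀ lam, dθ lam = ⨅ t : Θ, ((Lag (par t) lam : ℝ) : EReal))
    (Pstar Dstar Dθstar : EReal)
    (hP : Pstar = ⨅ p ∈ {p : Pol | ∀ i, Lc p i ≤ 0}, ((J p : ℝ) : EReal))
    (hD : Dstar = ⨆ lam ∈ {lam : Fin r → ℝ | 0 ≤ lam}, d lam)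
    (hDθ : Dθstar = ⨆ lam ∈ {lam : Fin r → ℝ | 0 ≤ lam}, dθ lam)
    -- zero duality gap for the non-parametric problem
    (hstrong : Pstar = Dstar)
    -- ε-universal parametrization: any Lagrangian minimizer admits an ε-approximation
    (happrox : ∀ lam : Fin r → ℝ, 0 ≤ lam →
        ∀ p : Pol, (∀ q : Pol, Lag p lam ≤ Lag q lam) →
          ∃ t : Θ, |Lag (par t) lam - Lag p lam| ≤
            (Br + (∑ i, |lam i|) * Bl) * ε / (1 - γ))
    -- Lagrangian minimizers exist
    (hmin : ∀ lam : Fin r → ℝ, 0 ≤ lam → ∃ p : Pol, ∀ q : Pol, Lag p lam ≤ Lag q lam)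
    -- λ*_ε maximizes the dual function of the perturbed problem with ξ_i = −B_l ε/(1−γ)
    (lamε : Fin r → ℝ) (hlamε : 0 ≤ lamε)
    (hlamε_max : ∀ lam : Fin r → ℝ, 0 ≤ lam →
        d lam + ((∑ i, lam i) * (Bl * ε / (1 - γ)) : ℝ)
          ≤ d lamε + ((∑ i, lamε i) * (Bl * ε / (1 - γ)) : ℝ)) :
    Pstar ≤ Dθstar ∧
      Dθstar ≤ Pstar + (((Br + (∑ i, |lamε i|) * Bl) * ε / (1 - γ) : ℝ) : EReal) := by
  set K := Bl * ε / (1 - γ) with hK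
  obtain ⟨pε, hpε⟩ := hmin lamε hlamε
  have hdlamε : d lamε = ((Lag pε lamε : ℝ) : EReal) := by
    rw [hd]
    exact le_antisymm (iInf_le _ pε) (le_iInf fun q => EReal.coe_le_coe_iff.mpr (hpε q))
  have hdε_le_P : ((Lag pε lamε : ℝ) : EReal) ≤ Pstar := by
    rw [hstrong, hD, ← hdlamε]
    exact le_biSup d hlamε
  constructor
  · rw [hstrong, hD, hDθ]
    refine iSup₂_le fun lam hlam => ?_
    refine le_trans ?_ (le_biSup dθ hlam)
    rw [hd, hdθ]
    exact le_iInf fun t => iInf_le _ (par t)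
  · rw [hDθ]
    refine iSup₂_le fun lam hlam => ?_
    obtain ⟨p, hp⟩ := hmin lam hlam
    obtain ⟨t, ht⟩ := happrox lam hlam p hp
    have hdlam : d lam = ((Lag p lam : ℝ) : EReal) := by
      rw [hd]
      exact le_antisymm (iInf_le _ p) (le_iInf fun q => EReal.coe_le_coe_iff.mpr (hp q))
    have hmax := hlamε_max lam hlam
    rw [hdlam, hdlamε, ← EReal.coe_add, ← EReal.coe_add] at hmax
    have hmaxR : Lag p lam + (∑ i, lam i) * K ≤ Lag pε lamε + (∑ i, lamε i) * K :=
      EReal.coe_le_coe_iff.mp hmax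
    have habs : ∀ (mu : Fin r → ℝ), 0 ≤ mu → (∑ i, |mu i|) = ∑ i, mu i := fun mu hmu =>
      Finset.sum_congr rfl fun i _ => abs_of_nonneg (hmu i)
    have hsplit : ∀ (mu : Fin r → ℝ), 0 ≤ mu →
        (Br + (∑ i, |mu i|) * Bl) * ε / (1 - γ)
          = Br * ε / (1 - γ) + (∑ i, mu i) * K := by
      intro mu hmu
      rw [habs mu hmu, hK]; ring
    have hreal : Lag (par t) lam
        ≤ Lag pε lamε + (Br + (∑ i, |lamε i|) * Bl) * ε / (1 - γ) := by
      have h1 : Lag (par t) lam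
          ≤ Lag p lam + (Br + (∑ i, |lam i|) * Bl) * ε / (1 - γ) := by
        have h2 := (abs_le.mp ht).2
        linarith
      rw [hsplit lam hlam] at h1
      rw [hsplit lamε hlamε]
      linarith
    calc dθ lam ≤ ((Lag (par t) lam : ℝ) : EReal) := by rw [hdθ]; exact iInf_le _ t
    _ ≤ ((Lag pε lamε + (Br + (∑ i, |lamε i|) * Bl) * ε / (1 - γ) : ℝ) : EReal) :=
        EReal.coe_le_coe_iff.mpr hreal
    _ = ((Lag pε lamε : ℝ) : EReal) + (((Br + (∑ i, |lamε i|) * Bl) * ε / (1 - γ) : ℝ) : EReal) :=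
        EReal.coe_add _ _
    _ ≤ Pstar + (((Br + (∑ i, |lamε i|) * Bl) * ε / (1 - γ) : ℝ) : EReal) :=
        add_le_add hdε_le_P le_rfl
end

section
/- For a discounted occupation-measure difference: if π and π_θ are stochastic policies on action space Γ with sup_{s∈S} ∫_Γ |π(a|s) − π_θ(a|s)| da ≤ ε for an ε-universal parametrization, and ρ_π, ρ_{π_θ} denote the normalized discounted occupation measures they induce in an MDP with discount γ ∈ [0,1), then ∫_{S×Γ} |dρ_π − dρ_{π_θ}| ≤ ε/(1−γ). -/
open MeasureTheory ProbabilityTheory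
open scoped ENNReal NNReal

namespace OccTVAux

variable {α : Type*} {β : Type*} [MeasurableSpace α] [MeasurableSpace β]

/-- Functional total-variation style bound between two measures. -/
def TvLe (μ ν : Measure α) (c : ℝ≥0∞) : Prop :=
  ∀ g : α → ℝ≥0∞, Measurable g → (∀ x, g x ≤ 1) →
    (∫⁻ x, g x ∂μ) + ∫⁻ x, (1 - g x) ∂ν ≤ (∫⁻ x, g x ∂ν) + (∫⁻ x, (1 - g x) ∂μ) + c

lemma lint_ne_top (μ : Measure α) [IsFiniteMeasure μ] {g : α → ℝ≥0∞} (hg : ∀ x, g x ≤ 1) :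
    (∫⁻ x, g x ∂μ) ≠ ⊤ := by
  refine ((lintegral_mono hg).trans_lt ?_).ne
  rw [lintegral_one]
  exact measure_lt_top μ Set.univ

lemma TvLe.mono {μ ν : Measure α} {c c' : ℝ≥0∞} (h : TvLe μ ν c) (hcc : c ≤ c') :
    TvLe μ ν c' := fun g hg hg1 =>
  (h g hg hg1).trans (by gcongr)

lemma jordan_add_eq (μ ν : Measure α) [IsFiniteMeasure μ] [IsFiniteMeasure ν] :
    μ + (μ.toSignedMeasure - ν.toSignedMeasure).toJordanDecomposition.negPart
      = ν + (μ.toSignedMeasure - ν.toSignedMeasure).toJordanDecomposition.posPart := by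
  set s := μ.toSignedMeasure - ν.toSignedMeasure with hsdef
  ext A hA
  have h1 : s A = (s.toJordanDecomposition.posPart A).toReal
      - (s.toJordanDecomposition.negPart A).toReal := by
    conv_lhs => rw [← SignedMeasure.toSignedMeasure_toJordanDecomposition s]
    rw [JordanDecomposition.toSignedMeasure, Measure.toSignedMeasure_sub_apply hA]; rfl
  have h2 : s A = (μ A).toReal - (ν A).toReal := Measure.toSignedMeasure_sub_apply hA
  rw [Measure.add_apply, Measure.add_apply,
    ← ENNReal.toReal_eq_toReal_iff' (by finiteness) (by finiteness),
    ENNReal.toReal_add (by finiteness) (by finiteness),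
    ENNReal.toReal_add (by finiteness) (by finiteness)]
  linarith

lemma tvLe_totalVariation (μ ν : Measure α) [IsFiniteMeasure μ] [IsFiniteMeasure ν] :
    TvLe μ ν ((μ.toSignedMeasure - ν.toSignedMeasure).totalVariation Set.univ) := by
  intro g hg hg1
  set s := μ.toSignedMeasure - ν.toSignedMeasure
  set p := s.toJordanDecomposition.posPart with hp
  set n := s.toJordanDecomposition.negPart with hn
  have hm : μ + n = ν + p := jordan_add_eq μ ν
  have h1 : (∫⁻ x, g x ∂μ) + ∫⁻ x, g x ∂n = (∫⁻ x, g x ∂ν) + ∫⁻ x, g x ∂p := by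
    rw [← lintegral_add_measure, ← lintegral_add_measure, hm]
  have h2 : (∫⁻ x, (1 - g x) ∂ν) + ∫⁻ x, (1 - g x) ∂p
      = (∫⁻ x, (1 - g x) ∂μ) + ∫⁻ x, (1 - g x) ∂n := by
    rw [← lintegral_add_measure, ← lintegral_add_measure, hm]
  have hpb : (∫⁻ x, g x ∂p) ≤ p Set.univ := by
    refine (lintegral_mono hg1).trans ?_
    rw [lintegral_one]
  have hnb : (∫⁻ x, (1 - g x) ∂n) ≤ n Set.univ := by
    refine (lintegral_mono fun x => tsub_le_self).trans ?_
    rw [lintegral_one]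
  have htv : s.totalVariation Set.univ = p Set.univ + n Set.univ := rfl
  calc (∫⁻ x, g x ∂μ) + ∫⁻ x, (1 - g x) ∂ν
      ≤ ((∫⁻ x, g x ∂μ) + ∫⁻ x, g x ∂n) + ((∫⁻ x, (1 - g x) ∂ν) + ∫⁻ x, (1 - g x) ∂p) := by
        calc (∫⁻ x, g x ∂μ) + ∫⁻ x, (1 - g x) ∂ν
            ≤ ((∫⁻ x, g x ∂μ) + ∫⁻ x, g x ∂n) + (∫⁻ x, (1 - g x) ∂ν) := by
              gcongr; exact self_le_add_right _ _
          _ ≤ _ := by gcongr; exact self_le_add_right _ _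
    _ = ((∫⁻ x, g x ∂ν) + ∫⁻ x, g x ∂p) + ((∫⁻ x, (1 - g x) ∂μ) + ∫⁻ x, (1 - g x) ∂n) := by
        rw [h1, h2]
    _ ≤ ((∫⁻ x, g x ∂ν) + p Set.univ) + ((∫⁻ x, (1 - g x) ∂μ) + n Set.univ) := by gcongr
    _ = (∫⁻ x, g x ∂ν) + (∫⁻ x, (1 - g x) ∂μ) + s.totalVariation Set.univ := by
        rw [htv]; ring

lemma TvLe.trans {μ ν σ : Measure α} [IsFiniteMeasure σ] {c d : ℝ≥0∞}
    (h1 : TvLe μ σ c) (h2 : TvLe σ ν d) : TvLe μ ν (c + d) := by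
  intro g hg hg1
  have hx : (∫⁻ x, g x ∂σ) + (∫⁻ x, (1 - g x) ∂σ) ≠ ⊤ :=
    ENNReal.add_ne_top.mpr ⟨lint_ne_top σ hg1, lint_ne_top σ fun x => tsub_le_self⟩
  rw [← ENNReal.add_le_add_iff_right hx]
  calc ((∫⁻ x, g x ∂μ) + ∫⁻ x, (1 - g x) ∂ν) + ((∫⁻ x, g x ∂σ) + ∫⁻ x, (1 - g x) ∂σ)
      = ((∫⁻ x, g x ∂μ) + ∫⁻ x, (1 - g x) ∂σ) + ((∫⁻ x, g x ∂σ) + ∫⁻ x, (1 - g x) ∂ν) := by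
        ring
    _ ≤ ((∫⁻ x, g x ∂σ) + (∫⁻ x, (1 - g x) ∂μ) + c)
        + ((∫⁻ x, g x ∂ν) + (∫⁻ x, (1 - g x) ∂σ) + d) :=
        add_le_add (h1 g hg hg1) (h2 g hg hg1)
    _ = ((∫⁻ x, g x ∂ν) + (∫⁻ x, (1 - g x) ∂μ) + (c + d))
        + ((∫⁻ x, g x ∂σ) + ∫⁻ x, (1 - g x) ∂σ) := by ring

lemma TvLe.bind {μ ν : Measure α} {c : ℝ≥0∞} {k : α → Measure β} (hk : Measurable k)
    (hkp : ∀ a, IsProbabilityMeasure (k a)) (h : TvLe μ ν c) :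
    TvLe (μ.bind k) (ν.bind k) c := by
  intro g hg hg1
  have hgm : Measurable fun x => 1 - g x := measurable_const.sub hg
  have hh : Measurable fun a => ∫⁻ x, g x ∂(k a) := (Measure.measurable_lintegral hg).comp hk
  have hh1 : ∀ a, (∫⁻ x, g x ∂(k a)) ≤ 1 := by
    intro a
    have := hkp a
    refine (lintegral_mono hg1).trans ?_
    rw [lintegral_one, measure_univ]
  have hsub : ∀ a : α, ∫⁻ x, (1 - g x) ∂(k a) = 1 - ∫⁻ x, g x ∂(k a) := by
    intro a
    have := hkp a
    rw [lintegral_sub hg (lint_ne_top (k a) hg1) (Filter.Eventually.of_forall hg1),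
      lintegral_one, measure_univ]
  rw [Measure.lintegral_bind hk.aemeasurable hg.aemeasurable, Measure.lintegral_bind hk.aemeasurable hg.aemeasurable,
    Measure.lintegral_bind hk.aemeasurable hgm.aemeasurable, Measure.lintegral_bind hk.aemeasurable hgm.aemeasurable]
  simp only [hsub]
  exact h _ hh hh1

lemma TvLe.compProd_right {μ ν : Measure α} [SFinite μ] [SFinite ν] {c : ℝ≥0∞}
    (κ : Kernel α β) [IsMarkovKernel κ] (h : TvLe μ ν c) :
    TvLe (μ ⊗ₘ κ) (ν ⊗ₘ κ) c := by
  intro g hg hg1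
  have hgm : Measurable fun x => 1 - g x := measurable_const.sub hg
  have hh : Measurable fun a => ∫⁻ b, g (a, b) ∂(κ a) :=
    Measurable.lintegral_kernel_prod_right' hg
  have hh1 : ∀ a, (∫⁻ b, g (a, b) ∂(κ a)) ≤ 1 := by
    intro a
    refine (lintegral_mono fun b => hg1 _).trans ?_
    rw [lintegral_one, measure_univ]
  have hsub : ∀ a : α, ∫⁻ b, (1 - g (a, b)) ∂(κ a) = 1 - ∫⁻ b, g (a, b) ∂(κ a) := by
    intro a
    have hga : Measurable fun b => g (a, b) := by exact hg.comp measurable_prodMk_left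
    rw [lintegral_sub hga
      (lint_ne_top (κ a) fun b => hg1 (a, b)) (Filter.Eventually.of_forall fun b => hg1 (a, b)),
      lintegral_one, measure_univ]
  rw [Measure.lintegral_compProd hg, Measure.lintegral_compProd hg,
    Measure.lintegral_compProd hgm, Measure.lintegral_compProd hgm]
  simp only [hsub]
  exact h _ hh hh1

lemma TvLe.compProd_left (μ : Measure α) [IsProbabilityMeasure μ] {c : ℝ≥0∞}
    (κ₁ κ₂ : Kernel α β) [IsMarkovKernel κ₁] [IsMarkovKernel κ₂]
    (h : ∀ a, TvLe (κ₁ a) (κ₂ a) c) :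
    TvLe (μ ⊗ₘ κ₁) (μ ⊗ₘ κ₂) c := by
  intro g hg hg1
  have hgm : Measurable fun x => 1 - g x := measurable_const.sub hg
  have hh1 : Measurable fun a => ∫⁻ b, g (a, b) ∂(κ₁ a) :=
    Measurable.lintegral_kernel_prod_right' hg
  have hh2 : Measurable fun a => ∫⁻ b, g (a, b) ∂(κ₂ a) :=
    Measurable.lintegral_kernel_prod_right' hg
  have hm1 : Measurable fun a => ∫⁻ b, (1 - g (a, b)) ∂(κ₁ a) :=
    Measurable.lintegral_kernel_prod_right' hgm
  rw [Measure.lintegral_compProd hg, Measure.lintegral_compProd hg,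
    Measure.lintegral_compProd hgm, Measure.lintegral_compProd hgm]
  calc (∫⁻ a, ∫⁻ b, g (a, b) ∂(κ₁ a) ∂μ) + ∫⁻ a, ∫⁻ b, (1 - g (a, b)) ∂(κ₂ a) ∂μ
      = ∫⁻ a, ((∫⁻ b, g (a, b) ∂(κ₁ a)) + ∫⁻ b, (1 - g (a, b)) ∂(κ₂ a)) ∂μ :=
        (lintegral_add_left hh1 _).symm
    _ ≤ ∫⁻ a, ((∫⁻ b, g (a, b) ∂(κ₂ a)) + (∫⁻ b, (1 - g (a, b)) ∂(κ₁ a)) + c) ∂μ := by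
        refine lintegral_mono fun a => ?_
        exact h a _ (hg.comp measurable_prodMk_left) fun b => hg1 (a, b)
    _ = (∫⁻ a, ∫⁻ b, g (a, b) ∂(κ₂ a) ∂μ) + (∫⁻ a, ∫⁻ b, (1 - g (a, b)) ∂(κ₁ a) ∂μ) + c := by
        rw [lintegral_add_right _ measurable_const, lintegral_add_left hh2, lintegral_const,
          measure_univ, mul_one]

lemma TvLe.smul {μ ν : Measure α} {c : ℝ≥0∞} (r : ℝ≥0∞) (h : TvLe μ ν c) :
    TvLe (r • μ) (r • ν) (r * c) := by
  intro g hg hg1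
  simp only [lintegral_smul_measure]
  calc r * (∫⁻ x, g x ∂μ) + r * ∫⁻ x, (1 - g x) ∂ν
      = r * ((∫⁻ x, g x ∂μ) + ∫⁻ x, (1 - g x) ∂ν) := by ring
    _ ≤ r * ((∫⁻ x, g x ∂ν) + (∫⁻ x, (1 - g x) ∂μ) + c) := mul_le_mul_right (h g hg hg1) r
    _ = r * (∫⁻ x, g x ∂ν) + r * (∫⁻ x, (1 - g x) ∂μ) + r * c := by ring

lemma TvLe.sum {μs νs : ℕ → Measure α} {cs : ℕ → ℝ≥0∞} (h : ∀ t, TvLe (μs t) (νs t) (cs t)) :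
    TvLe (Measure.sum μs) (Measure.sum νs) (∑' t, cs t) := by
  intro g hg hg1
  rw [lintegral_sum_measure, lintegral_sum_measure, lintegral_sum_measure,
    lintegral_sum_measure, ← ENNReal.tsum_add, ← ENNReal.tsum_add, ← ENNReal.tsum_add]
  exact ENNReal.tsum_le_tsum fun t => h t g hg hg1

lemma totalVariation_le_of_tvLe {μ ν : Measure α} [IsFiniteMeasure μ] [IsFiniteMeasure ν]
    {c : ℝ≥0∞} (h : TvLe μ ν c) :
    (μ.toSignedMeasure - ν.toSignedMeasure).totalVariation Set.univ ≤ c := by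
  by_cases hc : c = ⊤
  · simp [hc]
  set s := μ.toSignedMeasure - ν.toSignedMeasure with hsdef
  obtain ⟨i, hi₁, hi₂, hi₃, hpos, hneg⟩ := s.toJordanDecomposition_spec
  -- apply `h` with the indicator of `i`
  have hgmeas : Measurable (Set.indicator i (1 : α → ℝ≥0∞)) :=
    measurable_one.indicator hi₁
  have hgle : ∀ x, Set.indicator i (1 : α → ℝ≥0∞) x ≤ 1 := by
    intro x
    by_cases hx : x ∈ i <;> simp [hx]
  have hcompl : ∀ x, 1 - Set.indicator i (1 : α → ℝ≥0∞) x
      = Set.indicator iᶜ (1 : α → ℝ≥0∞) x := by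
    intro x
    by_cases hx : x ∈ i <;> simp [hx]
  have hkey := h _ hgmeas hgle
  simp only [hcompl] at hkey
  rw [lintegral_indicator_one hi₁, lintegral_indicator_one hi₁,
    lintegral_indicator_one hi₁.compl, lintegral_indicator_one hi₁.compl] at hkey
  -- convert to a real inequality
  have hR : (μ i).toReal + (ν iᶜ).toReal ≤ (ν i).toReal + (μ iᶜ).toReal + c.toReal := by
    have h1 := ENNReal.toReal_mono (by finiteness) hkey
    rwa [ENNReal.toReal_add (by finiteness) (by finiteness),
      ENNReal.toReal_add (by finiteness) (by finiteness),
      ENNReal.toReal_add (by finiteness) (by finiteness)] at h1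
  -- compute the total variation
  have hsi : s i = (μ i).toReal - (ν i).toReal := Measure.toSignedMeasure_sub_apply hi₁
  have hsic : s iᶜ = (μ iᶜ).toReal - (ν iᶜ).toReal := Measure.toSignedMeasure_sub_apply hi₁.compl
  have hnn1 : 0 ≤ s i := VectorMeasure.nonneg_of_zero_le_restrict s hi₂
  have hnn2 : 0 ≤ -s iᶜ := neg_nonneg.mpr (VectorMeasure.nonpos_of_restrict_le_zero s hi₃)
  have hposu : s.toJordanDecomposition.posPart Set.univ = ENNReal.ofReal (s i) := by
    rw [hpos, SignedMeasure.toMeasureOfZeroLE_apply _ hi₂ hi₁ MeasurableSet.univ,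
      ENNReal.ofReal_eq_coe_nnreal hnn1]
    congr 1
    ext
    simp
  have hnegu : s.toJordanDecomposition.negPart Set.univ = ENNReal.ofReal (-s iᶜ) := by
    rw [hneg, SignedMeasure.toMeasureOfLEZero_apply _ hi₃ hi₁.compl MeasurableSet.univ,
      ENNReal.ofReal_eq_coe_nnreal hnn2]
    congr 1
    ext
    simp
  have htv : s.totalVariation Set.univ = ENNReal.ofReal (s i + -s iᶜ) := by
    rw [SignedMeasure.totalVariation, Measure.add_apply, hposu, hnegu,
      ENNReal.ofReal_add hnn1 hnn2]
  rw [htv]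
  refine ENNReal.ofReal_le_of_le_toReal ?_
  rw [hsi, hsic]
  linarith

lemma tsum_cost (γ ε : ℝ) (hγ0 : 0 ≤ γ) (hγ1 : γ < 1) (hε : 0 < ε) :
    ENNReal.ofReal (1 - γ) *
      ∑' t : ℕ, ENNReal.ofReal (γ ^ t) * (((t : ℝ≥0∞) + 1) * ENNReal.ofReal ε)
      = ENNReal.ofReal (ε / (1 - γ)) := by
  have h1γ : (0:ℝ) < 1 - γ := by linarith
  have hterm : ∀ t : ℕ, ENNReal.ofReal (γ ^ t) * (((t : ℝ≥0∞) + 1) * ENNReal.ofReal ε)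
      = ENNReal.ofReal (γ ^ t * (((t : ℝ) + 1) * ε)) := by
    intro t
    rw [ENNReal.ofReal_mul (by positivity), ENNReal.ofReal_mul (by positivity)]
    congr 2
    rw [ENNReal.ofReal_add (by positivity) zero_le_one, ENNReal.ofReal_natCast,
      ENNReal.ofReal_one]
  have hnorm : ‖γ‖ < 1 := by rw [Real.norm_eq_abs, abs_of_nonneg hγ0]; exact hγ1
  have hs1 : Summable fun t : ℕ => (t : ℝ) * γ ^ t := by
    simpa using summable_pow_mul_geometric_of_norm_lt_one 1 hnorm
  have hs2 : Summable fun t : ℕ => γ ^ t := summable_geometric_of_lt_one hγ0 hγ1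
  have hs : Summable fun t : ℕ => γ ^ t * (((t : ℝ) + 1) * ε) := by
    refine ((hs1.add hs2).mul_left ε).congr fun t => ?_
    ring
  rw [tsum_congr hterm, ← ENNReal.ofReal_tsum_of_nonneg (fun t => by positivity) hs,
    ← ENNReal.ofReal_mul (le_of_lt h1γ)]
  congr 1
  have hsplit : ∀ t : ℕ, γ ^ t * (((t : ℝ) + 1) * ε)
      = ε * ((t : ℝ) * γ ^ t) + ε * γ ^ t := by
    intro t; ring
  rw [tsum_congr hsplit, Summable.tsum_add (hs1.mul_left ε) (hs2.mul_left ε), tsum_mul_left,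
    tsum_mul_left, tsum_coe_mul_geometric_of_norm_lt_one hnorm,
    tsum_geometric_of_lt_one hγ0 hγ1]
  field_simp
  ring

end OccTVAux

/-- Lemma 1 of [Paternain et al.]: in an MDP with transition kernel `P`,
initial state distribution `ν0`, and discount `γ ∈ [0,1)`, if two policies (Markov
kernels) `κπ, κθ` satisfy the uniform total-variation bound
`∫_Γ |π(a|s) − π_θ(a|s)| da ≤ ε` for all states `s`, then the normalized discounted
occupation measures `ρ_π, ρ_θ` they induce satisfy `∫ |dρ_π − dρ_θ| ≤ ε/(1−γ)`. -/
theorem occupation_measure_tv_bound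
    {S Γ : Type*} [MeasurableSpace S] [MeasurableSpace Γ]
    (P : ProbabilityTheory.Kernel (S × Γ) S) [IsMarkovKernel P]
    (ν0 : Measure S) [IsProbabilityMeasure ν0]
    (κπ κθ : ProbabilityTheory.Kernel S Γ) [IsMarkovKernel κπ] [IsMarkovKernel κθ]
    (γ ε : ℝ) (hγ0 : 0 ≤ γ) (hγ1 : γ < 1) (hε : 0 < ε)
    -- state marginals `msπ t = law of s_t` under each policy
    (msπ msθ : ℕ → Measure S)
    [∀ t, IsProbabilityMeasure (msπ t)] [∀ t, IsProbabilityMeasure (msθ t)]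
    (hmsπ0 : msπ 0 = ν0) (hmsθ0 : msθ 0 = ν0)
    (hmsπ : ∀ t, msπ (t + 1) = ((msπ t) ⊗ₘ κπ).bind (fun sa => P sa))
    (hmsθ : ∀ t, msθ (t + 1) = ((msθ t) ⊗ₘ κθ).bind (fun sa => P sa))
    -- normalized discounted occupation measures on S × Γ
    (ρπ ρθ : Measure (S × Γ)) [IsFiniteMeasure ρπ] [IsFiniteMeasure ρθ]
    (hρπ : ρπ = ENNReal.ofReal (1 - γ) •
        Measure.sum (fun t : ℕ => ENNReal.ofReal (γ ^ t) • ((msπ t) ⊗ₘ κπ)))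
    (hρθ : ρθ = ENNReal.ofReal (1 - γ) •
        Measure.sum (fun t : ℕ => ENNReal.ofReal (γ ^ t) • ((msθ t) ⊗ₘ κθ)))
    -- uniform total-variation bound between the conditional action distributions
    (htv : ∀ s : S, ((κπ s).toSignedMeasure - (κθ s).toSignedMeasure).totalVariation
        Set.univ ≤ ENNReal.ofReal ε) :
    (ρπ.toSignedMeasure - ρθ.toSignedMeasure).totalVariation Set.univ ≤
      ENNReal.ofReal (ε / (1 - γ)) := by
  -- pointwise bound between the policies, in functional form
  have hpol : ∀ s : S, OccTVAux.TvLe (κπ s) (κθ s) (ENNReal.ofReal ε) := fun s =>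
    (OccTVAux.tvLe_totalVariation (κπ s) (κθ s)).mono (htv s)
  -- one-step bound on the joint state-action laws
  have hstep : ∀ (t : ℕ) (c : ℝ≥0∞), OccTVAux.TvLe (msπ t) (msθ t) c →
      OccTVAux.TvLe ((msπ t) ⊗ₘ κπ) ((msθ t) ⊗ₘ κθ) (ENNReal.ofReal ε + c) := by
    intro t c hc
    have hb : OccTVAux.TvLe ((msπ t) ⊗ₘ κπ) ((msπ t) ⊗ₘ κθ) (ENNReal.ofReal ε) :=
      OccTVAux.TvLe.compProd_left (msπ t) κπ κθ hpol
    exact hb.trans (hc.compProd_right κθ)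
  -- bound on the state marginals, by induction on time
  have hms : ∀ t : ℕ, OccTVAux.TvLe (msπ t) (msθ t) ((t : ℝ≥0∞) * ENNReal.ofReal ε) := by
    intro t
    induction t with
    | zero =>
      simp only [Nat.cast_zero, zero_mul]
      rw [hmsπ0, hmsθ0]
      intro g hg hg1
      rw [add_zero, add_comm]
    | succ t ih =>
      rw [hmsπ t, hmsθ t]
      have hnext := (hstep t _ ih).bind P.measurable (fun sa => inferInstance)
      refine hnext.mono (le_of_eq ?_)
      push_cast
      ring
  -- bound on the joint laws at each time
  have hjoint : ∀ t : ℕ, OccTVAux.TvLe ((msπ t) ⊗ₘ κπ) ((msθ t) ⊗ₘ κθ)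
      (((t : ℝ≥0∞) + 1) * ENNReal.ofReal ε) := by
    intro t
    refine (hstep t _ (hms t)).mono (le_of_eq ?_)
    ring
  -- bound on the occupation measures
  have hsum : OccTVAux.TvLe ρπ ρθ (ENNReal.ofReal (1 - γ) *
      ∑' t : ℕ, ENNReal.ofReal (γ ^ t) * (((t : ℝ≥0∞) + 1) * ENNReal.ofReal ε)) := by
    rw [hρπ, hρθ]
    exact (OccTVAux.TvLe.sum (fun t => (hjoint t).smul (ENNReal.ofReal (γ ^ t)))).smul _
  have hfin := OccTVAux.totalVariation_le_of_tvLe hsum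
  rwa [OccTVAux.tsum_cost γ ε hγ0 hγ1 hε] at hfin
end
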